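/- Assume condition (L): p > 2, or p < 2 and α < δ. Then every solution w of equation (E) on an interval [r₀,∞) satisfies: there exists L ∈ ℝ such that lim_{r→∞} r^α w(r) = L. -/

import Mathlib

open Set Filter Topology Asymptotics MeasureTheory
set_option maxHeartbeats 1000000

/-- The p-Laplacian nonlinearity φ_p(x) = |x|^{p-2} x. -/
noncomputable def phiP (p x : ℝ) : ℝ := |x| ^ (p - 2) * x

/-- `w` is a solution of equation (E) on the interval `I ⊆ (0,∞)`:
`w` is C¹ on `I`, `|w'|^{p-2} w'` is C¹ on `I`, and the equation
`(|w'|^{p-2}w')' + ((N-1)/r)|w'|^{p-2}w' + r w' + α w + |w|^{q-1} w = 0`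
holds on `I` (derivatives taken within `I`). -/
def IsSolutionOn (N : ℕ) (p q α : ℝ) (w : ℝ → ℝ) (I : Set ℝ) : Prop :=
  ContDiffOn ℝ 1 w I ∧
  ContDiffOn ℝ 1 (fun r => phiP p (derivWithin w I r)) I ∧
  ∀ r ∈ I,
    derivWithin (fun s => phiP p (derivWithin w I s)) I r
      + ((N : ℝ) - 1) / r * phiP p (derivWithin w I r)
      + r * derivWithin w I r + α * w r + |w r| ^ (q - 1) * w r = 0

/-- `w` is the global solution of (E) on `[0,∞)` with `w(0) = a`, `w'(0) = 0`:
`w ∈ C¹([0,∞))`, `|w'|^{p-2}w' ∈ C¹([0,∞))`, and (E) holds on `(0,∞)`. -/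
def IsGlobalSolution (N : ℕ) (p q α a : ℝ) (w : ℝ → ℝ) : Prop :=
  ContDiffOn ℝ 1 w (Ici 0) ∧
  ContDiffOn ℝ 1 (fun r => phiP p (derivWithin w (Ici 0) r)) (Ici 0) ∧
  (∀ r ∈ Ioi (0 : ℝ),
    derivWithin (fun s => phiP p (derivWithin w (Ici 0) s)) (Ici 0) r
      + ((N : ℝ) - 1) / r * phiP p (derivWithin w (Ici 0) r)
      + r * derivWithin w (Ici 0) r + α * w r + |w r| ^ (q - 1) * w r = 0) ∧
  w 0 = a ∧ derivWithin w (Ici 0) 0 = 0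

/-- `r` is an isolated zero of `w` relative to the set `I`. -/
def IsIsolatedZeroOn (w : ℝ → ℝ) (I : Set ℝ) (r : ℝ) : Prop :=
  r ∈ I ∧ w r = 0 ∧ ∀ᶠ s in 𝓝[I \ {r}] r, w s ≠ 0

/-- `w` has at least `n` isolated zeros in `(0,∞)`. -/
def HasAtLeastIsolatedZeros (w : ℝ → ℝ) (n : ℕ) : Prop :=
  ∃ z : Fin n → ℝ, StrictMono z ∧ ∀ i, 0 < z i ∧ IsIsolatedZeroOn w (Ici 0) (z i)


section AuxLemmas


lemma phiP_zero (p : ℝ) : phiP p 0 = 0 := by simp [phiP]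

lemma phiP_neg (p x : ℝ) : phiP p (-x) = - phiP p x := by simp [phiP]

lemma phiP_of_nonneg {p x : ℝ} (hp : 1 < p) (hx : 0 ≤ x) : phiP p x = x ^ (p - 1) := by
  rcases eq_or_lt_of_le hx with h | h
  · simp [phiP, ← h, Real.zero_rpow (by intro hh; linarith : p - 1 ≠ 0)]
  · rw [phiP, abs_of_pos h, ← Real.rpow_add_one h.ne']
    ring_nf

lemma abs_phiP {p : ℝ} (hp : 1 < p) (x : ℝ) : |phiP p x| = |x| ^ (p - 1) := by
  rcases eq_or_ne x 0 with rfl | hx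
  · simp [phiP, Real.zero_rpow (by intro hh; linarith : p - 1 ≠ 0)]
  · rw [phiP, abs_mul, abs_of_nonneg (Real.rpow_nonneg (abs_nonneg x) _),
      ← Real.rpow_add_one (abs_ne_zero.2 hx)]
    ring_nf

lemma phiP_mono {p : ℝ} (hp : 1 < p) : Monotone (phiP p) := by
  have key : ∀ x y : ℝ, 0 ≤ x → x ≤ y → phiP p x ≤ phiP p y := by
    intro x y hx hxy
    rw [phiP_of_nonneg hp hx, phiP_of_nonneg hp (hx.trans hxy)]
    exact Real.rpow_le_rpow hx hxy (by linarith)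
  intro x y hxy
  rcases le_total 0 x with hx | hx
  · exact key x y hx hxy
  · rcases le_total 0 y with hy | hy
    · calc phiP p x = -phiP p (-x) := by rw [phiP_neg]; ring
        _ ≤ 0 := by
          rw [phiP_of_nonneg hp (by linarith : (0:ℝ) ≤ -x)]
          simp only [neg_nonpos]
          exact Real.rpow_nonneg (by linarith) _
        _ ≤ phiP p y := by
          rw [phiP_of_nonneg hp hy]; exact Real.rpow_nonneg hy _
    · have := key (-y) (-x) (by linarith) (by linarith)
      rw [phiP_neg, phiP_neg] at this
      linarith

lemma phiP_inv {p : ℝ} (hp : 1 < p) (x : ℝ) : phiP (p / (p - 1)) (phiP p x) = x := by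
  rcases eq_or_ne x 0 with rfl | hx
  · simp [phiP_zero]
  have hp1 : p - 1 ≠ 0 := by intro hh; linarith
  have hax : (0:ℝ) < |x| := abs_pos.2 hx
  rw [phiP, abs_phiP hp, phiP]
  rw [← Real.rpow_mul (abs_nonneg x)]
  have he : (p - 1) * (p / (p - 1) - 2) = 2 - p := by field_simp; ring
  rw [he, ← mul_assoc, ← Real.rpow_add hax]
  norm_num


lemma barrier_aux {v b v' b' : ℝ → ℝ} {a : ℝ}
    (hv : ∀ r ∈ Ici a, HasDerivAt v (v' r) r)
    (hb : ∀ r ∈ Ici a, HasDerivAt b (b' r) r)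
    (h0 : v a < b a)
    (hstep : ∀ r ∈ Ici a, b r ≤ v r → v' r < b' r) :
    ∀ r ∈ Ici a, v r ≤ b r := by
  by_contra hcon
  push_neg at hcon
  obtain ⟨r₃, hr₃, hvb⟩ := hcon
  set d : ℝ → ℝ := fun r => v r - b r with hd
  have hdD : ∀ r ∈ Ici a, HasDerivAt d (v' r - b' r) r := fun r hr => (hv r hr).sub (hb r hr)
  have hdC : ContinuousOn d (Icc a r₃) := fun r hr =>
    ((hdD r (mem_of_mem_of_subset hr Icc_subset_Ici_self)).continuousAt).continuousWithinAt
  set S := Icc a r₃ ∩ d ⁻¹' (Ici 0) with hS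
  have hSne : S.Nonempty := ⟨r₃, ⟨⟨hr₃, le_rfl⟩, by simp [hd]; linarith⟩⟩
  have hSclosed : IsClosed S := hdC.preimage_isClosed_of_isClosed isClosed_Icc isClosed_Ici
  have hSbdd : BddBelow S := ⟨a, fun x hx => hx.1.1⟩
  set c := sInf S with hc
  have hcS : c ∈ S := hSclosed.csInf_mem hSne hSbdd
  have hac : a < c := by
    rcases eq_or_lt_of_le hcS.1.1 with h | h
    · exfalso; have : (0:ℝ) ≤ d a := by rw [h]; exact hcS.2
      simp only [hd] at this; linarith
    · exact h
  have hlt : ∀ s ∈ Ico a c, d s < 0 := by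
    intro s hs
    by_contra hpos
    push_neg at hpos
    have hsS : s ∈ S := ⟨⟨hs.1, le_trans hs.2.le hcS.1.2⟩, hpos⟩
    exact absurd (csInf_le hSbdd hsS) (not_le.2 hs.2)
  have hderiv : v' c - b' c < 0 := by
    have hbc : b c ≤ v c := by have := hcS.2; simp only [hd, mem_preimage, mem_Ici] at this; linarith
    have := hstep c (le_of_lt hac) hbc
    linarith
  -- slope argument
  have hDW : HasDerivWithinAt d (v' c - b' c) (Ico a c) c :=
    (hdD c (le_of_lt hac)).hasDerivWithinAt
  have hslope : Tendsto (slope d c) (𝓝[(Ico a c) \ {c}] c) (𝓝 (v' c - b' c)) :=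
    hasDerivWithinAt_iff_tendsto_slope.1 hDW
  have hne : ((Ico a c) \ {c} : Set ℝ) = Ico a c := by
    apply diff_singleton_eq_self; intro h; exact absurd h.2 (lt_irrefl c)
  rw [hne] at hslope
  have hNB : (𝓝[Ico a c] c).NeBot := by
    rw [← mem_closure_iff_nhdsWithin_neBot, closure_Ico (ne_of_lt hac)]
    exact ⟨le_of_lt hac, le_rfl⟩
  have hnonneg : ∀ᶠ s in 𝓝[Ico a c] c, (0:ℝ) ≤ slope d c s := by
    filter_upwards [self_mem_nhdsWithin] with s hs
    rw [slope_def_field]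
    have h1 : d s < 0 := hlt s hs
    have h2 : (0:ℝ) ≤ d c := by have := hcS.2; simpa using this
    rw [show d s - d c = -(d c - d s) by ring, show s - c = -(c - s) by ring, neg_div_neg_eq]
    have h4 : s < c := hs.2
    exact div_nonneg (by linarith) (by linarith)
  have := ge_of_tendsto hslope hnonneg
  linarith

lemma gronwall_aux {a₀ a : ℝ} (haa : a₀ < a) {ζ h g : ℝ → ℝ}
    (hh0 : ∀ r ∈ Ioi a₀, 0 ≤ h r)
    (hhc : ContinuousOn h (Ioi a₀))
    (hgc : ContinuousOn g (Ioi a₀))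
    (hζ : ∀ r ∈ Ioi a₀, HasDerivAt ζ (-(h r) * ζ r + g r) r) :
    ∀ R, a ≤ R → |ζ R| ≤ |ζ a| + ∫ r in a..R, |g r| := by
  intro R hR
  have haR : ∀ u, a ≤ u → uIcc a u ⊆ Ioi a₀ := by
    intro u hu
    rw [uIcc_of_le hu]
    exact fun x hx => lt_of_lt_of_le haa hx.1
  set H : ℝ → ℝ := fun u => ∫ s in a..u, h s with hH
  have hint : ∀ u, a ≤ u → IntervalIntegrable h volume a u := fun u hu =>
    (hhc.mono (haR u hu)).intervalIntegrable
  have HH : ∀ u ∈ Icc a R, HasDerivAt H (h u) u := by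
    intro u hu
    exact intervalIntegral.integral_hasDerivAt_right (hint u hu.1)
      (hhc.stronglyMeasurableAtFilter isOpen_Ioi _ (lt_of_lt_of_le haa hu.1))
      (hhc.continuousAt (isOpen_Ioi.mem_nhds (lt_of_lt_of_le haa hu.1)))
  have Hnonneg : ∀ u, a ≤ u → 0 ≤ H u :=
    fun u hu => intervalIntegral.integral_nonneg hu
      (fun s hs => hh0 s (lt_of_lt_of_le haa hs.1))
  have Hmono : ∀ u₁ u₂, a ≤ u₁ → u₁ ≤ u₂ → u₂ ≤ R → H u₁ ≤ H u₂ := by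
    intro u₁ u₂ h1 h2 h3
    have e1 : H u₁ + ∫ s in u₁..u₂, h s = H u₂ :=
      intervalIntegral.integral_add_adjacent_intervals (hint u₁ h1)
        ((hhc.mono (fun x hx => lt_of_lt_of_le haa (le_trans h1 ((uIcc_of_le h2) ▸ hx).1))).intervalIntegrable)
    have e2 : 0 ≤ ∫ s in u₁..u₂, h s :=
      intervalIntegral.integral_nonneg h2 (fun s hs => hh0 s (lt_of_lt_of_le haa (le_trans h1 hs.1)))
    linarith
  set Z : ℝ → ℝ := fun u => ζ u * Real.exp (H u) with hZ
  have HZ : ∀ u ∈ Icc a R, HasDerivAt Z (g u * Real.exp (H u)) u := by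
    intro u hu
    have hu' : u ∈ Ioi a₀ := lt_of_lt_of_le haa hu.1
    have := (hζ u hu').mul ((HH u hu).exp)
    refine this.congr_deriv ?_
    ring
  have hHC : ContinuousOn (fun u => g u * Real.exp (H u)) (Icc a R) := by
    intro u hu
    exact (((hgc.continuousAt (isOpen_Ioi.mem_nhds (lt_of_lt_of_le haa hu.1))).mul
      (((HH u hu).continuousAt).rexp)).continuousWithinAt)
  have hFTC : ∫ u in a..R, g u * Real.exp (H u) = Z R - Z a := by
    apply intervalIntegral.integral_eq_sub_of_hasDerivAt
    · intro x hx; exact HZ x ((uIcc_of_le hR) ▸ hx)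
    · exact (hHC.mono (by rw [uIcc_of_le hR])).intervalIntegrable
  have hZa : Z a = ζ a := by simp [hZ, hH]
  have habs : |∫ u in a..R, g u * Real.exp (H u)| ≤ (∫ u in a..R, |g u|) * Real.exp (H R) := by
    refine le_trans (intervalIntegral.abs_integral_le_integral_abs hR) ?_
    rw [← intervalIntegral.integral_mul_const]
    apply intervalIntegral.integral_mono_on hR
    · exact ((hHC.mono (by rw [uIcc_of_le hR])).intervalIntegrable).abs
    · apply ContinuousOn.intervalIntegrable
      rw [uIcc_of_le hR]
      intro u hu
      exact (((hgc.continuousAt (isOpen_Ioi.mem_nhds (lt_of_lt_of_le haa hu.1))).abs).continuousWithinAt).mul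
        continuousWithinAt_const
    · intro x hx
      rw [abs_mul, abs_of_nonneg (Real.exp_nonneg _)]
      exact mul_le_mul_of_nonneg_left (Real.exp_le_exp.2 (Hmono x R hx.1 hx.2 le_rfl)) (abs_nonneg _)
  have hZR : |Z R| ≤ |ζ a| + (∫ u in a..R, |g u|) * Real.exp (H R) := by
    have : Z R = Z a + ∫ u in a..R, g u * Real.exp (H u) := by linarith [hFTC]
    rw [this, hZa]
    exact le_trans (abs_add_le _ _) (by linarith [habs])
  have hexp1 : 1 ≤ Real.exp (H R) := by
    rw [← Real.exp_zero]
    exact Real.exp_le_exp.2 (Hnonneg R hR)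
  have hZRval : |Z R| = |ζ R| * Real.exp (H R) := by
    rw [hZ]; rw [abs_mul, abs_of_nonneg (Real.exp_nonneg _)]
  rw [hZRval] at hZR
  have hexppos : 0 < Real.exp (H R) := Real.exp_pos _
  nlinarith [abs_nonneg (ζ R), abs_nonneg (ζ a)]


lemma self_mul_phiP {p : ℝ} (hp : 1 < p) (x : ℝ) : x * phiP p x = |x| ^ p := by
  rcases eq_or_ne x 0 with rfl | hx
  · simp [phiP, Real.zero_rpow (by intro hh; linarith : p ≠ 0)]
  · have hax : |x| ≠ 0 := abs_ne_zero.2 hx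
    rw [phiP, show x * (|x| ^ (p-2) * x) = |x| ^ (p-2) * (x * x) by ring,
      ← abs_mul_abs_self x, ← mul_assoc, ← Real.rpow_add_one hax, ← Real.rpow_add_one hax]
    ring_nf

lemma abs_rpow_mul_self {q : ℝ} (hq : 1 < q) (x : ℝ) : |x| ^ (q - 1) * |x| = |x| ^ q := by
  rcases eq_or_ne x 0 with rfl | hx
  · simp [Real.zero_rpow (by intro hh; linarith : q - 1 ≠ 0),
      Real.zero_rpow (by intro hh; linarith : q ≠ 0)]
  · rw [← Real.rpow_add_one (abs_ne_zero.2 hx)]; ring_nf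

lemma zeta_deriv {N : ℕ} {q α r₀ : ℝ} (hr₀ : 0 < r₀)
    {w w₁ v v₁ : ℝ → ℝ}
    (hwD : ∀ r ∈ Ioi r₀, HasDerivAt w (w₁ r) r)
    (hvD : ∀ r ∈ Ioi r₀, HasDerivAt v (v₁ r) r)
    (hODE : ∀ r ∈ Ioi r₀, v₁ r
      = -(((N:ℝ)-1)/r) * v r - r * w₁ r - α * w r - |w r| ^ (q-1) * w r) :
    ∀ r ∈ Ioi r₀, HasDerivAt (fun s => s ^ (α-1) * (s * w s + v s))
      (-(|w r| ^ (q-1) / r) * (r ^ (α-1) * (r * w r + v r))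
        + (α - N + |w r| ^ (q-1)) * (r ^ (α-2) * v r)) r := by
  intro r hr
  have hrpos : (0:ℝ) < r := lt_trans hr₀ hr
  have h₁ : HasDerivAt (fun s : ℝ => s ^ (α-1)) ((α-1) * r ^ (α-2)) r := by
    have := Real.hasDerivAt_rpow_const (x := r) (p := α - 1) (Or.inl hrpos.ne')
    convert this using 2
    ring_nf
  have h₂ : HasDerivAt (fun s => s * w s + v s) (1 * w r + r * w₁ r + v₁ r) r :=
    ((hasDerivAt_id r).mul (hwD r hr)).add (hvD r hr)
  have h₃ := h₁.mul h₂
  refine h₃.congr_deriv ?_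
  rw [hODE r hr]
  have e1 : r ^ (α-1) = r ^ (α-2) * r := by
    rw [← Real.rpow_add_one hrpos.ne']; ring_nf
  rw [e1]
  field_simp
  ring


lemma energy_deriv {N : ℕ} {p q α r₀ : ℝ} (hr₀ : 0 < r₀) (hp : 1 < p) (hq : 1 < q)
    {w w₁ v v₁ : ℝ → ℝ}
    (hwD : ∀ r ∈ Ioi r₀, HasDerivAt w (w₁ r) r)
    (hvD : ∀ r ∈ Ioi r₀, HasDerivAt v (v₁ r) r)
    (hODE : ∀ r ∈ Ioi r₀, v₁ r
      = -(((N:ℝ)-1)/r) * v r - r * w₁ r - α * w r - |w r| ^ (q-1) * w r)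
    (hw₁v : ∀ r, phiP (p/(p-1)) (v r) = w₁ r) :
    ∀ r ∈ Ioi r₀, HasDerivAt
      (fun s => (p-1)/p * |v s| ^ (p/(p-1)) + α/2 * (w s)^2 + |w s| ^ (q+1) / (q+1))
      (-(((N:ℝ)-1)/r) * (w₁ r * v r) - r * (w₁ r)^2) r := by
  intro r hr
  have hrpos : (0:ℝ) < r := lt_trans hr₀ hr
  have hp1 : (0:ℝ) < p - 1 := by linarith
  have hp' : 1 < p/(p-1) := by rw [lt_div_iff₀ hp1]; linarith
  have key : (p/(p-1)) * |v r| ^ (p/(p-1) - 2) * v r = (p/(p-1)) * w₁ r := by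
    rw [← hw₁v r, phiP]; ring
  have hE1 : HasDerivAt (fun s => |v s| ^ (p/(p-1))) ((p/(p-1)) * w₁ r * v₁ r) r := by
    have habs := hasDerivAt_abs_rpow (v r) hp'
    have := habs.comp r (hvD r hr)
    rw [show (fun s => |v s| ^ (p/(p-1))) = (fun x => |x| ^ (p/(p-1))) ∘ v from rfl]
    refine this.congr_deriv ?_
    rw [key]
  have hE2 : HasDerivAt (fun s => (w s)^2) (2 * w r * w₁ r) r := by
    have := (hwD r hr).pow 2
    refine this.congr_deriv ?_
    norm_num
  have hE3 : HasDerivAt (fun s => |w s| ^ (q+1)) (((q+1) * |w r| ^ (q-1) * w r) * w₁ r) r := by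
    have habs := hasDerivAt_abs_rpow (w r) (show (1:ℝ) < q + 1 by linarith)
    have := habs.comp r (hwD r hr)
    rw [show (fun s => |w s| ^ (q+1)) = (fun x => |x| ^ (q+1)) ∘ w from rfl]
    refine this.congr_deriv ?_
    rw [show q + 1 - 2 = q - 1 by ring]
  have hsum := ((hE1.const_mul ((p-1)/p)).add (hE2.const_mul (α/2))).add (hE3.div_const (q+1))
  refine hsum.congr_deriv ?_
  rw [hODE r hr]
  field_simp
  ring

set_option maxHeartbeats 1000000

lemma Vbound_main {N : ℕ} (hN : 1 ≤ N) {p q α r₀ : ℝ} (hp : 1 < p) (hq : 1 < q) (hα : 0 < α)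
    {w w₁ v v₁ : ℝ → ℝ}
    (hvD : ∀ r ∈ Ioi r₀, HasDerivAt v (v₁ r) r)
    (hODE : ∀ r ∈ Ioi r₀, v₁ r
      = -(((N:ℝ)-1)/r) * v r - r * w₁ r - α * w r - |w r| ^ (q-1) * w r)
    (hw₁v : ∀ r, phiP (p/(p-1)) (v r) = w₁ r)
    {r₁ M₁ : ℝ} (hr₀1 : r₀ < r₁) (hM₁ : ∀ r, r₁ ≤ r → |v r| ≤ M₁)
    {γ A r₃ : ℝ} (hγ : 0 ≤ γ) (hγp : γ * (2 - p) < p) (hA : 0 ≤ A)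
    (hr₁3 : r₁ ≤ r₃) (h13 : 1 ≤ r₃)
    (hwb : ∀ r, r₃ ≤ r → |w r| ≤ A * r ^ (-γ)) :
    ∃ r₄ K, r₃ ≤ r₄ ∧ 0 < K ∧ ∀ r, r₄ ≤ r → |v r| ≤ K * r ^ (-((γ+1)*(p-1))) := by
  have hp1 : (0:ℝ) < p - 1 := by linarith
  have hp' : 1 < p/(p-1) := by rw [lt_div_iff₀ hp1]; linarith
  obtain ⟨lam, hlam⟩ : ∃ lam : ℝ, lam = (γ+1)*(p-1) := ⟨_, rfl⟩
  have hlam0 : 0 ≤ lam := by rw [hlam]; positivity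
  have hgap : 0 < lam + 1 - γ := by
    have : lam + 1 - γ = p - γ*(2-p) := by rw [hlam]; ring
    linarith
  obtain ⟨B, hB⟩ : ∃ B : ℝ, B = α * A + A ^ q := ⟨_, rfl⟩
  have hB0 : 0 ≤ B := by rw [hB]; positivity
  have hM₁0 : 0 ≤ M₁ := (abs_nonneg _).trans (hM₁ r₁ le_rfl)
  obtain ⟨C, hC⟩ : ∃ C : ℝ, C = M₁ + 1 := ⟨_, rfl⟩
  have hC0 : (0:ℝ) < C := by rw [hC]; linarith
  obtain ⟨cp, hcp⟩ : ∃ cp : ℝ, cp = C ^ (1/(p-1)) := ⟨_, rfl⟩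
  have hcp0 : 0 < cp := by rw [hcp]; exact Real.rpow_pos_of_pos hC0 _
  obtain ⟨r₄, hr₄⟩ : ∃ r₄ : ℝ, r₄ = max r₃ ((B + lam*C)/cp + 1) := ⟨_, rfl⟩
  have hr₄3 : r₃ ≤ r₄ := by rw [hr₄]; exact le_max_left _ _
  have h1r₄ : 1 ≤ r₄ := le_trans h13 hr₄3
  have hr₄pos : (0:ℝ) < r₄ := by linarith
  have hr₀r₄ : r₀ < r₄ := lt_of_lt_of_le hr₀1 (le_trans hr₁3 hr₄3)
  have hr₄big : B + lam*C < cp * r₄ := by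
    have h1 : (B + lam*C)/cp + 1 ≤ r₄ := by rw [hr₄]; exact le_max_right _ _
    have h2 : (B + lam*C)/cp < r₄ := by linarith
    calc B + lam*C = ((B + lam*C)/cp) * cp := by field_simp
    _ < r₄ * cp := by exact mul_lt_mul_of_pos_right h2 hcp0
    _ = cp * r₄ := by ring
  obtain ⟨K, hK⟩ : ∃ K : ℝ, K = C * r₄ ^ lam := ⟨_, rfl⟩
  have hKpos : 0 < K := by rw [hK]; exact mul_pos hC0 (Real.rpow_pos_of_pos hr₄pos _)
  have hKval : K ^ (1/(p-1)) = cp * r₄ ^ (γ+1) := by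
    rw [hK, Real.mul_rpow hC0.le (Real.rpow_pos_of_pos hr₄pos _).le, ← hcp,
      ← Real.rpow_mul hr₄pos.le,
      show lam * (1/(p-1)) = γ + 1 by rw [hlam]; field_simp]
  have hKey : ∀ r, r₄ ≤ r → lam * K * r ^ (γ - lam - 1) < K ^ (1/(p-1)) - B := by
    intro r hr
    have hrpos : (0:ℝ) < r := lt_of_lt_of_le hr₄pos hr
    have f1 : r ^ (γ - lam - 1) ≤ r₄ ^ (γ - lam - 1) :=
      Real.rpow_le_rpow_of_nonpos hr₄pos hr (by linarith)
    have f2 : r₄ ^ lam * r₄ ^ (γ - lam - 1) = r₄ ^ (γ-1) := by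
      rw [← Real.rpow_add hr₄pos]; ring_nf
    have f3 : r₄ ^ (γ-1:ℝ) ≤ r₄ ^ γ := Real.rpow_le_rpow_of_exponent_le h1r₄ (by linarith)
    have f4 : (1:ℝ) ≤ r₄ ^ γ := Real.one_le_rpow h1r₄ hγ
    have f5 : r₄ ^ (γ+1) = r₄ ^ γ * r₄ := by rw [Real.rpow_add_one hr₄pos.ne']
    have f6 : lam * K * r ^ (γ - lam - 1) ≤ lam * C * r₄ ^ (γ-1) := by
      rw [hK]
      calc lam * (C * r₄ ^ lam) * r ^ (γ - lam - 1)
          ≤ lam * (C * r₄ ^ lam) * r₄ ^ (γ - lam - 1) := by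
            apply mul_le_mul_of_nonneg_left f1
            positivity
        _ = lam * C * (r₄ ^ lam * r₄ ^ (γ - lam - 1)) := by ring
        _ = lam * C * r₄ ^ (γ-1) := by rw [f2]
    have f7 : lam * C * r₄ ^ (γ-1) ≤ lam * C * r₄ ^ γ :=
      mul_le_mul_of_nonneg_left f3 (by positivity)
    rw [hKval, f5]
    have f8 : (B + lam*C) * r₄ ^ γ < cp * r₄ * r₄ ^ γ :=
      mul_lt_mul_of_pos_right hr₄big (by positivity)
    have f9 : B ≤ B * r₄ ^ γ := le_mul_of_one_le_right hB0 f4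
    nlinarith
  have hinitval : K * r₄ ^ (-lam) = C := by
    rw [hK, mul_assoc, ← Real.rpow_add hr₄pos]
    simp
  -- derivative facts on Ici r₄
  have hmem : ∀ r, r₄ ≤ r → r ∈ Ioi r₀ := fun r hr => lt_of_lt_of_le hr₀r₄ hr
  have hvD' : ∀ r ∈ Ici r₄, HasDerivAt v (v₁ r) r := fun r hr => hvD r (hmem r hr)
  have hbD : ∀ r ∈ Ici r₄, HasDerivAt (fun s => K * s ^ (-lam)) (K * (-lam * r ^ (-lam-1))) r := by
    intro r hr
    have hrpos : (0:ℝ) < r := lt_of_lt_of_le hr₄pos hr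
    exact (Real.hasDerivAt_rpow_const (Or.inl hrpos.ne')).const_mul K
  have hgbound : ∀ r, r₄ ≤ r → α * |w r| + |w r| ^ (q-1) * |w r| ≤ B * r ^ (-γ) := by
    intro r hr
    have hrpos : (0:ℝ) < r := lt_of_lt_of_le hr₄pos hr
    have hr1 : (1:ℝ) ≤ r := le_trans h1r₄ hr
    have hw1 : |w r| ≤ A * r ^ (-γ) := hwb r (le_trans hr₄3 hr)
    have g1 : α * |w r| ≤ α * A * r ^ (-γ) := by
      have := mul_le_mul_of_nonneg_left hw1 hα.le
      linarith [this]
    have g2 : |w r| ^ (q-1) * |w r| ≤ A ^ q * r ^ (-γ) := by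
      rw [abs_rpow_mul_self hq]
      calc |w r| ^ q ≤ (A * r ^ (-γ)) ^ q :=
            Real.rpow_le_rpow (abs_nonneg _) hw1 (by linarith)
        _ = A ^ q * (r ^ (-γ)) ^ q := Real.mul_rpow hA (Real.rpow_pos_of_pos hrpos _).le
        _ = A ^ q * r ^ (-γ*q) := by rw [← Real.rpow_mul hrpos.le]
        _ ≤ A ^ q * r ^ (-γ) := by
            apply mul_le_mul_of_nonneg_left _ (by positivity)
            apply Real.rpow_le_rpow_of_exponent_le hr1
            nlinarith
    rw [hB]
    nlinarith
  have hNnn : (0:ℝ) ≤ (N:ℝ) - 1 := by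
    have : (1:ℝ) ≤ (N:ℝ) := by exact_mod_cast hN
    linarith
  have hp'1 : p/(p-1) - 1 = 1/(p-1) := by field_simp; ring
  have hbval : ∀ r, r₄ ≤ r → (K * r ^ (-lam)) ^ (1/(p-1)) = K ^ (1/(p-1)) * r ^ (-(γ+1)) := by
    intro r hr
    have hrpos : (0:ℝ) < r := lt_of_lt_of_le hr₄pos hr
    rw [Real.mul_rpow hKpos.le (Real.rpow_pos_of_pos hrpos _).le, ← Real.rpow_mul hrpos.le,
      show -lam * (1/(p-1)) = -(γ+1) by rw [hlam]; field_simp]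
  have hrmul : ∀ r, r₄ ≤ r → r * r ^ (-(γ+1)) = r ^ (-γ) := by
    intro r hr
    have hrpos : (0:ℝ) < r := lt_of_lt_of_le hr₄pos hr
    rw [show (-γ : ℝ) = -(γ+1) + 1 by ring, Real.rpow_add_one hrpos.ne']
    ring
  have hsplit : ∀ r, r₄ ≤ r → r ^ (-lam-1:ℝ) = r ^ (-γ) * r ^ (γ - lam - 1) := by
    intro r hr
    have hrpos : (0:ℝ) < r := lt_of_lt_of_le hr₄pos hr
    rw [← Real.rpow_add hrpos]
    ring_nf
  have hODEr : ∀ r, r₄ ≤ r → v₁ r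
      = -(((N:ℝ)-1)/r) * v r - r * w₁ r - α * w r - |w r| ^ (q-1) * w r :=
    fun r hr => hODE r (hmem r hr)
  -- upper barrier
  have h0up : v r₄ < K * r₄ ^ (-lam) := by
    rw [hinitval]
    calc v r₄ ≤ |v r₄| := le_abs_self _
      _ ≤ M₁ := hM₁ r₄ (le_trans hr₁3 hr₄3)
      _ < C := by rw [hC]; linarith
  have hstepup : ∀ r ∈ Ici r₄, K * r ^ (-lam) ≤ v r → v₁ r < K * (-lam * r ^ (-lam-1)) := by
    intro r hr hbv
    have hrpos : (0:ℝ) < r := lt_of_lt_of_le hr₄pos hr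
    have hbpos : 0 < K * r ^ (-lam) := mul_pos hKpos (Real.rpow_pos_of_pos hrpos _)
    have hvpos : 0 < v r := lt_of_lt_of_le hbpos hbv
    have hphi : K ^ (1/(p-1)) * r ^ (-(γ+1)) ≤ w₁ r := by
      rw [← hw₁v r]
      calc K ^ (1/(p-1)) * r ^ (-(γ+1)) = (K * r ^ (-lam)) ^ (1/(p-1)) := (hbval r hr).symm
        _ = (K * r ^ (-lam)) ^ (p/(p-1) - 1) := by rw [hp'1]
        _ = phiP (p/(p-1)) (K * r ^ (-lam)) := (phiP_of_nonneg hp' hbpos.le).symm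
        _ ≤ phiP (p/(p-1)) (v r) := phiP_mono hp' hbv
    have ht1 : -(((N:ℝ)-1)/r) * v r ≤ 0 := by
      have ha : (0:ℝ) ≤ ((N:ℝ)-1)/r := div_nonneg hNnn hrpos.le
      nlinarith
    have ht2 : -(r * w₁ r) ≤ -(K ^ (1/(p-1)) * r ^ (-γ)) := by
      have := mul_le_mul_of_nonneg_left hphi hrpos.le
      have h2 : r * (K ^ (1/(p-1)) * r ^ (-(γ+1))) = K ^ (1/(p-1)) * r ^ (-γ) := by
        rw [← hrmul r hr]; ring
      linarith [this, h2.symm.le]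
    have ht3 : -(α * w r) - |w r| ^ (q-1) * w r ≤ B * r ^ (-γ) := by
      have e1 : -(α * w r) ≤ α * |w r| := by
        have := neg_abs_le (w r)
        nlinarith [abs_nonneg (w r)]
      have e2 : -(|w r| ^ (q-1) * w r) ≤ |w r| ^ (q-1) * |w r| := by
        have := neg_abs_le (w r)
        have hnn : (0:ℝ) ≤ |w r| ^ (q-1) := Real.rpow_nonneg (abs_nonneg _) _
        nlinarith
      linarith [hgbound r hr]
    have hkey := hKey r hr
    have hfin : v₁ r ≤ -(K ^ (1/(p-1)) * r ^ (-γ)) + B * r ^ (-γ) := by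
      rw [hODEr r hr]
      linarith
    have hr2 : lam * K * r ^ (-lam-1) < (K ^ (1/(p-1)) - B) * r ^ (-γ) := by
      rw [hsplit r hr]
      have hrg : (0:ℝ) < r ^ (-γ) := Real.rpow_pos_of_pos hrpos _
      calc lam * K * (r ^ (-γ) * r ^ (γ - lam - 1))
          = (lam * K * r ^ (γ - lam - 1)) * r ^ (-γ) := by ring
        _ < (K ^ (1/(p-1)) - B) * r ^ (-γ) := mul_lt_mul_of_pos_right hkey hrg
    have : K * (-lam * r ^ (-lam-1)) = -(lam * K * r ^ (-lam-1)) := by ring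
    rw [this]
    linarith [hr2, hfin]
  -- lower barrier
  have hup : ∀ r ∈ Ici r₄, v r ≤ K * r ^ (-lam) :=
    fun r hr => barrier_aux hvD' hbD h0up hstepup r hr
  have hvDn : ∀ r ∈ Ici r₄, HasDerivAt (fun s => -v s) (-(v₁ r)) r :=
    fun r hr => (hvD' r hr).neg
  have h0low : -v r₄ < K * r₄ ^ (-lam) := by
    rw [hinitval]
    have h1 : |v r₄| ≤ M₁ := hM₁ r₄ (le_trans hr₁3 hr₄3)
    have := neg_abs_le (v r₄)
    rw [hC]; linarith
  have hsteplow : ∀ r ∈ Ici r₄, K * r ^ (-lam) ≤ -v r → -(v₁ r) < K * (-lam * r ^ (-lam-1)) := by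
    intro r hr hbv
    have hrpos : (0:ℝ) < r := lt_of_lt_of_le hr₄pos hr
    have hbpos : 0 < K * r ^ (-lam) := mul_pos hKpos (Real.rpow_pos_of_pos hrpos _)
    have hvneg : v r ≤ -(K * r ^ (-lam)) := by linarith
    have hphi : w₁ r ≤ -(K ^ (1/(p-1)) * r ^ (-(γ+1))) := by
      rw [← hw₁v r]
      calc phiP (p/(p-1)) (v r) ≤ phiP (p/(p-1)) (-(K * r ^ (-lam))) := phiP_mono hp' hvneg
        _ = -(phiP (p/(p-1)) (K * r ^ (-lam))) := phiP_neg _ _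
        _ = -((K * r ^ (-lam)) ^ (p/(p-1) - 1)) := by rw [phiP_of_nonneg hp' hbpos.le]
        _ = -(K ^ (1/(p-1)) * r ^ (-(γ+1))) := by rw [hp'1, hbval r hr]
    have ht1 : 0 ≤ -(((N:ℝ)-1)/r) * v r := by
      have ha : (0:ℝ) ≤ ((N:ℝ)-1)/r := div_nonneg hNnn hrpos.le
      nlinarith
    have ht2 : K ^ (1/(p-1)) * r ^ (-γ) ≤ -(r * w₁ r) := by
      have := mul_le_mul_of_nonneg_left hphi hrpos.le
      have h2 : r * (K ^ (1/(p-1)) * r ^ (-(γ+1))) = K ^ (1/(p-1)) * r ^ (-γ) := by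
        rw [← hrmul r hr]; ring
      nlinarith
    have ht3 : -(B * r ^ (-γ)) ≤ -(α * w r) - |w r| ^ (q-1) * w r := by
      have e1 : α * w r ≤ α * |w r| := mul_le_mul_of_nonneg_left (le_abs_self _) hα.le
      have e2 : |w r| ^ (q-1) * w r ≤ |w r| ^ (q-1) * |w r| :=
        mul_le_mul_of_nonneg_left (le_abs_self _) (Real.rpow_nonneg (abs_nonneg _) _)
      linarith [hgbound r hr]
    have hkey := hKey r hr
    have hfin : K ^ (1/(p-1)) * r ^ (-γ) - B * r ^ (-γ) ≤ v₁ r := by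
      rw [hODEr r hr]
      linarith
    have hr2 : lam * K * r ^ (-lam-1) < (K ^ (1/(p-1)) - B) * r ^ (-γ) := by
      rw [hsplit r hr]
      have hrg : (0:ℝ) < r ^ (-γ) := Real.rpow_pos_of_pos hrpos _
      calc lam * K * (r ^ (-γ) * r ^ (γ - lam - 1))
          = (lam * K * r ^ (γ - lam - 1)) * r ^ (-γ) := by ring
        _ < (K ^ (1/(p-1)) - B) * r ^ (-γ) := mul_lt_mul_of_pos_right hkey hrg
    have : K * (-lam * r ^ (-lam-1)) = -(lam * K * r ^ (-lam-1)) := by ring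
    rw [this]
    linarith [hr2, hfin]
  have hlow : ∀ r ∈ Ici r₄, -v r ≤ K * r ^ (-lam) :=
    fun r hr => barrier_aux hvDn hbD h0low hsteplow r hr
  refine ⟨r₄, K, hr₄3, hKpos, ?_⟩
  intro r hr
  rw [← hlam, abs_le]
  exact ⟨by linarith [hlow r hr], hup r hr⟩

lemma wStep {N : ℕ} {q α r₀ : ℝ} (hr₀ : 0 < r₀) (hq : 1 < q)
    {w w₁ v v₁ : ℝ → ℝ}
    (hwD : ∀ r ∈ Ioi r₀, HasDerivAt w (w₁ r) r)
    (hvD : ∀ r ∈ Ioi r₀, HasDerivAt v (v₁ r) r)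
    (hODE : ∀ r ∈ Ioi r₀, v₁ r
      = -(((N:ℝ)-1)/r) * v r - r * w₁ r - α * w r - |w r| ^ (q-1) * w r)
    (hwC : ContinuousOn w (Ioi r₀)) (hvC : ContinuousOn v (Ioi r₀))
    {r₄ K lam ε A₀ : ℝ} (hr₀4 : r₀ < r₄) (h14 : 1 ≤ r₄) (hK : 0 < K) (hε : 0 < ε)
    (hA₀ : 0 ≤ A₀)
    (hwb : ∀ r, r₄ ≤ r → |w r| ≤ A₀)
    (hvb : ∀ r, r₄ ≤ r → |v r| ≤ K * r ^ (-lam)) :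
    ∃ A', 0 ≤ A' ∧ ∀ R, r₄ ≤ R →
      |R ^ α * w R| ≤ A' * R ^ (max (α-1-lam) ε) := by
  obtain ⟨e', he'⟩ : ∃ e' : ℝ, e' = max (α-1-lam) ε := ⟨_, rfl⟩
  have he'pos : 0 < e' := by rw [he']; exact lt_max_of_lt_right hε
  have hne : ∀ r ∈ Ioi r₀, r ≠ 0 := fun r hr => ne_of_gt (lt_trans hr₀ hr)
  have habsC : ContinuousOn (fun r => |w r| ^ (q-1)) (Ioi r₀) := by
    intro r hr
    have h1 : ContinuousAt w r := hwC.continuousAt (isOpen_Ioi.mem_nhds hr)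
    exact (h1.abs.rpow_const (Or.inr (by linarith))).continuousWithinAt
  have hhC : ContinuousOn (fun r => |w r| ^ (q-1) / r) (Ioi r₀) :=
    habsC.div continuousOn_id hne
  have hh0 : ∀ r ∈ Ioi r₀, 0 ≤ |w r| ^ (q-1) / r :=
    fun r hr => div_nonneg (Real.rpow_nonneg (abs_nonneg _) _) (le_of_lt (lt_trans hr₀ hr))
  have hrpowC : ContinuousOn (fun r : ℝ => r ^ (α-2:ℝ)) (Ioi r₀) :=
    fun r hr => (Real.continuousAt_rpow_const r _ (Or.inl (hne r hr))).continuousWithinAt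
  have hgC : ContinuousOn (fun r => (α - N + |w r| ^ (q-1)) * (r ^ (α-2:ℝ) * v r)) (Ioi r₀) :=
    (continuousOn_const.add habsC).mul (hrpowC.mul hvC)
  have hζD := zeta_deriv (α := α) hr₀ hwD hvD hODE
  have hgr := gronwall_aux hr₀4 hh0 hhC hgC hζD
  obtain ⟨Cg, hCg⟩ : ∃ Cg : ℝ, Cg = (|α - N| + A₀ ^ (q-1)) * K := ⟨_, rfl⟩
  have hCg0 : 0 ≤ Cg := by
    rw [hCg]
    have : (0:ℝ) ≤ A₀ ^ (q-1) := Real.rpow_nonneg hA₀ _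
    positivity
  have hgb : ∀ r, r₄ ≤ r → |(α - N + |w r| ^ (q-1)) * (r ^ (α-2:ℝ) * v r)| ≤ Cg * r ^ (e'-1) := by
    intro r hr
    have hrpos : (0:ℝ) < r := lt_trans hr₀ (lt_of_lt_of_le hr₀4 hr)
    have hr1 : (1:ℝ) ≤ r := le_trans h14 hr
    have hq0 : (0:ℝ) ≤ |w r| ^ (q-1) := Real.rpow_nonneg (abs_nonneg _) _
    have e1 : |α - N + |w r| ^ (q-1)| ≤ |α - N| + A₀ ^ (q-1) := by
      refine le_trans (abs_add_le _ _) ?_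
      have : |(|w r| ^ (q-1))| = |w r| ^ (q-1) := abs_of_nonneg hq0
      rw [this]
      have : |w r| ^ (q-1) ≤ A₀ ^ (q-1) :=
        Real.rpow_le_rpow (abs_nonneg _) (hwb r hr) (by linarith)
      linarith
    have e2 : |r ^ (α-2:ℝ) * v r| ≤ K * r ^ (α-2-lam) := by
      rw [abs_mul, abs_of_nonneg (Real.rpow_nonneg hrpos.le _)]
      calc r ^ (α-2:ℝ) * |v r| ≤ r ^ (α-2:ℝ) * (K * r ^ (-lam)) :=
            mul_le_mul_of_nonneg_left (hvb r hr) (Real.rpow_nonneg hrpos.le _)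
        _ = K * (r ^ (α-2:ℝ) * r ^ (-lam)) := by ring
        _ = K * r ^ (α-2-lam) := by rw [← Real.rpow_add hrpos]; ring_nf
    have e3 : r ^ (α-2-lam:ℝ) ≤ r ^ (e'-1) := by
      apply Real.rpow_le_rpow_of_exponent_le hr1
      have : α - 1 - lam ≤ e' := by rw [he']; exact le_max_left _ _
      linarith
    rw [abs_mul, hCg]
    have hKr : (0:ℝ) ≤ K * r ^ (α-2-lam) := by positivity
    calc |α - N + |w r| ^ (q-1)| * |r ^ (α-2:ℝ) * v r|
        ≤ (|α - N| + A₀ ^ (q-1)) * (K * r ^ (α-2-lam)) := by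
          apply mul_le_mul e1 e2 (abs_nonneg _)
          have : (0:ℝ) ≤ A₀ ^ (q-1) := Real.rpow_nonneg hA₀ _
          positivity
      _ ≤ (|α - N| + A₀ ^ (q-1)) * (K * r ^ (e'-1)) := by
          apply mul_le_mul_of_nonneg_left _ (by positivity)
          exact mul_le_mul_of_nonneg_left e3 hK.le
      _ = (|α - N| + A₀ ^ (q-1)) * K * r ^ (e'-1) := by ring
  have hIg : ∀ R, r₄ ≤ R → (∫ r in r₄..R, |(α - N + |w r| ^ (q-1)) * (r ^ (α-2:ℝ) * v r)|)
      ≤ (Cg/e') * R ^ e' := by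
    intro R hR
    have hRpos : (0:ℝ) < R := lt_trans hr₀ (lt_of_lt_of_le hr₀4 hR)
    have hsub : uIcc r₄ R ⊆ Ioi r₀ := by
      rw [uIcc_of_le hR]
      exact fun x hx => lt_of_lt_of_le hr₀4 hx.1
    have hint1 : IntervalIntegrable
        (fun r => |(α - N + |w r| ^ (q-1)) * (r ^ (α-2:ℝ) * v r)|) volume r₄ R :=
      ((hgC.mono hsub).abs).intervalIntegrable
    have hint2 : IntervalIntegrable (fun r : ℝ => Cg * r ^ (e'-1)) volume r₄ R := by
      apply ContinuousOn.intervalIntegrable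
      intro x hx
      have hxpos : (0:ℝ) < x := lt_trans hr₀ (hsub hx)
      exact (continuousAt_const.mul
        (Real.continuousAt_rpow_const x _ (Or.inl hxpos.ne'))).continuousWithinAt
    have step1 : (∫ r in r₄..R, |(α - N + |w r| ^ (q-1)) * (r ^ (α-2:ℝ) * v r)|)
        ≤ ∫ r in r₄..R, Cg * r ^ (e'-1) := by
      apply intervalIntegral.integral_mono_on hR hint1 hint2
      exact fun x hx => hgb x hx.1
    have hnm : (0:ℝ) ∉ uIcc r₄ R := by
      intro hmem
      have := hsub hmem
      simp only [mem_Ioi] at this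
      linarith
    have step2 : (∫ r in r₄..R, (r:ℝ) ^ (e'-1)) = (R ^ e' - r₄ ^ e')/e' := by
      rw [integral_rpow (Or.inr ⟨by intro hh; linarith, hnm⟩)]
      norm_num
    have step3 : (∫ r in r₄..R, Cg * r ^ (e'-1)) = Cg * ((R ^ e' - r₄ ^ e')/e') := by
      rw [intervalIntegral.integral_const_mul, step2]
    have hr₄e : (0:ℝ) ≤ r₄ ^ e' := Real.rpow_nonneg (by linarith) _
    have : Cg * ((R ^ e' - r₄ ^ e')/e') ≤ (Cg/e') * R ^ e' := by
      rw [show (Cg/e') * R ^ e' = Cg * (R ^ e'/e') by ring]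
      exact mul_le_mul_of_nonneg_left ((div_le_div_iff_of_pos_right he'pos).2 (by linarith)) hCg0
    linarith [step1, step3.le, step3.ge]
  refine ⟨|(fun s : ℝ => s ^ (α-1) * (s * w s + v s)) r₄| + Cg/e' + K, by positivity, ?_⟩
  intro R hR
  have hRpos : (0:ℝ) < R := lt_trans hr₀ (lt_of_lt_of_le hr₀4 hR)
  have hR1 : (1:ℝ) ≤ R := le_trans h14 hR
  have hζb := hgr R hR
  have hIgb := hIg R hR
  have hid : R ^ α * w R = R ^ (α-1) * (R * w R + v R) - R ^ (α-1) * v R := by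
    have hRa : R ^ α = R ^ (α-1:ℝ) * R := by
      rw [← Real.rpow_add_one hRpos.ne']; ring_nf
    rw [hRa]; ring
  have hvRb : R ^ (α-1:ℝ) * |v R| ≤ K * R ^ e' := by
    calc R ^ (α-1:ℝ) * |v R| ≤ R ^ (α-1:ℝ) * (K * R ^ (-lam)) :=
          mul_le_mul_of_nonneg_left (hvb R hR) (Real.rpow_nonneg hRpos.le _)
      _ = K * (R ^ (α-1:ℝ) * R ^ (-lam)) := by ring
      _ = K * R ^ (α-1-lam) := by rw [← Real.rpow_add hRpos]; ring_nf
      _ ≤ K * R ^ e' := by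
          apply mul_le_mul_of_nonneg_left _ hK.le
          apply Real.rpow_le_rpow_of_exponent_le hR1
          rw [he']; exact le_max_left _ _
  have hRe1 : (1:ℝ) ≤ R ^ e' := Real.one_le_rpow hR1 he'pos.le
  rw [← he', hid]
  calc |R ^ (α-1:ℝ) * (R * w R + v R) - R ^ (α-1:ℝ) * v R|
      ≤ |R ^ (α-1:ℝ) * (R * w R + v R)| + |R ^ (α-1:ℝ) * v R| := abs_sub _ _
    _ ≤ (|(fun s : ℝ => s ^ (α-1) * (s * w s + v s)) r₄| + (Cg/e') * R ^ e')
        + R ^ (α-1:ℝ) * |v R| := by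
        have h1 : |R ^ (α-1:ℝ) * v R| = R ^ (α-1:ℝ) * |v R| := by
          rw [abs_mul, abs_of_nonneg (Real.rpow_nonneg hRpos.le _)]
        rw [h1]
        have h2 : |R ^ (α-1:ℝ) * (R * w R + v R)|
            ≤ |(fun s : ℝ => s ^ (α-1) * (s * w s + v s)) r₄| + (Cg/e') * R ^ e' := by
          calc |R ^ (α-1:ℝ) * (R * w R + v R)|
              = |(fun s : ℝ => s ^ (α-1) * (s * w s + v s)) R| := rfl
            _ ≤ |(fun s : ℝ => s ^ (α-1) * (s * w s + v s)) r₄|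
                + ∫ r in r₄..R, |(α - N + |w r| ^ (q-1)) * (r ^ (α-2:ℝ) * v r)| := hζb
            _ ≤ _ + (Cg/e') * R ^ e' := by linarith [hIgb]
        linarith
    _ ≤ (|(fun s : ℝ => s ^ (α-1) * (s * w s + v s)) r₄| + Cg/e' + K) * R ^ e' := by
        have h3 : R ^ (α-1:ℝ) * |v R| ≤ K * R ^ e' := hvRb
        have h4 : |(fun s : ℝ => s ^ (α-1) * (s * w s + v s)) r₄|
            ≤ |(fun s : ℝ => s ^ (α-1) * (s * w s + v s)) r₄| * R ^ e' :=
          le_mul_of_one_le_right (abs_nonneg _) hRe1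
        have h5 : (0:ℝ) ≤ Cg/e' := by positivity
        nlinarith [hRe1]

lemma final_conv {N : ℕ} {q α r₀ : ℝ} (hr₀ : 0 < r₀) (hq : 1 < q)
    {w w₁ v v₁ : ℝ → ℝ}
    (hwD : ∀ r ∈ Ioi r₀, HasDerivAt w (w₁ r) r)
    (hvD : ∀ r ∈ Ioi r₀, HasDerivAt v (v₁ r) r)
    (hODE : ∀ r ∈ Ioi r₀, v₁ r
      = -(((N:ℝ)-1)/r) * v r - r * w₁ r - α * w r - |w r| ^ (q-1) * w r)
    (hwC : ContinuousOn w (Ioi r₀)) (hvC : ContinuousOn v (Ioi r₀))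
    {r₅ K A lam m gam : ℝ}
    (hr₀5 : r₀ < r₅) (h15 : 1 ≤ r₅) (hK : 0 < K) (hA : 0 ≤ A)
    (hm : 0 < m) (hm2 : α - 1 - lam ≤ -m) (hm3 : m ≤ gam*(q-1)) (hgam : 0 ≤ gam)
    (hwb : ∀ r, r₅ ≤ r → |w r| ≤ A * r ^ (-gam))
    (hvb : ∀ r, r₅ ≤ r → |v r| ≤ K * r ^ (-lam)) :
    ∃ L : ℝ, Tendsto (fun r => r ^ α * w r) atTop (𝓝 L) := by
  have hr₅pos : (0:ℝ) < r₅ := lt_trans hr₀ hr₀5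
  have hne : ∀ r ∈ Ioi r₀, r ≠ 0 := fun r hr => ne_of_gt (lt_trans hr₀ hr)
  have habsC : ContinuousOn (fun r => |w r| ^ (q-1)) (Ioi r₀) := by
    intro r hr
    have h1 : ContinuousAt w r := hwC.continuousAt (isOpen_Ioi.mem_nhds hr)
    exact (h1.abs.rpow_const (Or.inr (by linarith))).continuousWithinAt
  have hhC : ContinuousOn (fun r => |w r| ^ (q-1) / r) (Ioi r₀) :=
    habsC.div continuousOn_id hne
  have hh0 : ∀ r ∈ Ioi r₀, 0 ≤ |w r| ^ (q-1) / r :=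
    fun r hr => div_nonneg (Real.rpow_nonneg (abs_nonneg _) _) (le_of_lt (lt_trans hr₀ hr))
  have hrpowC : ContinuousOn (fun r : ℝ => r ^ (α-2:ℝ)) (Ioi r₀) :=
    fun r hr => (Real.continuousAt_rpow_const r _ (Or.inl (hne r hr))).continuousWithinAt
  have hgC : ContinuousOn (fun r => (α - N + |w r| ^ (q-1)) * (r ^ (α-2:ℝ) * v r)) (Ioi r₀) :=
    (continuousOn_const.add habsC).mul (hrpowC.mul hvC)
  have hζD := zeta_deriv (α := α) hr₀ hwD hvD hODE
  have hζC : ContinuousOn (fun s : ℝ => s ^ (α-1) * (s * w s + v s)) (Ioi r₀) :=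
    fun r hr => (hζD r hr).continuousAt.continuousWithinAt
  have hgr := gronwall_aux hr₀5 hh0 hhC hgC hζD
  -- basic bounds
  have hwb0 : ∀ r, r₅ ≤ r → |w r| ≤ A := by
    intro r hr
    have hr1 : (1:ℝ) ≤ r := le_trans h15 hr
    have h2 : r ^ (-gam:ℝ) ≤ 1 := by
      rw [show (1:ℝ) = r ^ (0:ℝ) by rw [Real.rpow_zero]]
      exact Real.rpow_le_rpow_of_exponent_le hr1 (by linarith)
    calc |w r| ≤ A * r ^ (-gam) := hwb r hr
      _ ≤ A * 1 := mul_le_mul_of_nonneg_left h2 hA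
      _ = A := mul_one A
  obtain ⟨Cg, hCg⟩ : ∃ Cg : ℝ, Cg = (|α - (N:ℝ)| + A ^ (q-1)) * K := ⟨_, rfl⟩
  have hAq : (0:ℝ) ≤ A ^ (q-1:ℝ) := Real.rpow_nonneg hA _
  have hCg0 : 0 ≤ Cg := by rw [hCg]; positivity
  have hgb : ∀ r, r₅ ≤ r → |(α - N + |w r| ^ (q-1)) * (r ^ (α-2:ℝ) * v r)| ≤ Cg * r ^ (-1-m) := by
    intro r hr
    have hrpos : (0:ℝ) < r := lt_of_lt_of_le hr₅pos hr
    have hr1 : (1:ℝ) ≤ r := le_trans h15 hr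
    have hq0 : (0:ℝ) ≤ |w r| ^ (q-1) := Real.rpow_nonneg (abs_nonneg _) _
    have e1 : |α - (N:ℝ) + |w r| ^ (q-1)| ≤ |α - (N:ℝ)| + A ^ (q-1) := by
      refine le_trans (abs_add_le _ _) ?_
      rw [abs_of_nonneg hq0]
      have : |w r| ^ (q-1) ≤ A ^ (q-1) :=
        Real.rpow_le_rpow (abs_nonneg _) (hwb0 r hr) (by linarith)
      linarith
    have e2 : |r ^ (α-2:ℝ) * v r| ≤ K * r ^ (α-2-lam) := by
      rw [abs_mul, abs_of_nonneg (Real.rpow_nonneg hrpos.le _)]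
      calc r ^ (α-2:ℝ) * |v r| ≤ r ^ (α-2:ℝ) * (K * r ^ (-lam)) :=
            mul_le_mul_of_nonneg_left (hvb r hr) (Real.rpow_nonneg hrpos.le _)
        _ = K * (r ^ (α-2:ℝ) * r ^ (-lam)) := by ring
        _ = K * r ^ (α-2-lam) := by rw [← Real.rpow_add hrpos]; ring_nf
    have e3 : r ^ (α-2-lam:ℝ) ≤ r ^ (-1-m:ℝ) :=
      Real.rpow_le_rpow_of_exponent_le hr1 (by linarith)
    rw [abs_mul, hCg]
    calc |α - (N:ℝ) + |w r| ^ (q-1)| * |r ^ (α-2:ℝ) * v r|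
        ≤ (|α - (N:ℝ)| + A ^ (q-1)) * (K * r ^ (α-2-lam)) := by
          apply mul_le_mul e1 e2 (abs_nonneg _) (by positivity)
      _ ≤ (|α - (N:ℝ)| + A ^ (q-1)) * (K * r ^ (-1-m)) := by
          apply mul_le_mul_of_nonneg_left _ (by positivity)
          exact mul_le_mul_of_nonneg_left e3 hK.le
      _ = (|α - (N:ℝ)| + A ^ (q-1)) * K * r ^ (-1-m) := by ring
  have hIg : ∀ R, r₅ ≤ R → (∫ r in r₅..R, |(α - N + |w r| ^ (q-1)) * (r ^ (α-2:ℝ) * v r)|)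
      ≤ Cg * (r₅ ^ (-m:ℝ) / m) := by
    intro R hR
    have hsub : uIcc r₅ R ⊆ Ioi r₀ := by
      rw [uIcc_of_le hR]
      exact fun x hx => lt_of_lt_of_le hr₀5 hx.1
    have hint1 : IntervalIntegrable
        (fun r => |(α - N + |w r| ^ (q-1)) * (r ^ (α-2:ℝ) * v r)|) volume r₅ R :=
      ((hgC.mono hsub).abs).intervalIntegrable
    have hint2 : IntervalIntegrable (fun r : ℝ => Cg * r ^ (-1-m:ℝ)) volume r₅ R := by
      apply ContinuousOn.intervalIntegrable
      intro x hx
      have hxpos : (0:ℝ) < x := lt_trans hr₀ (hsub hx)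
      exact (continuousAt_const.mul
        (Real.continuousAt_rpow_const x _ (Or.inl hxpos.ne'))).continuousWithinAt
    have step1 : (∫ r in r₅..R, |(α - N + |w r| ^ (q-1)) * (r ^ (α-2:ℝ) * v r)|)
        ≤ ∫ r in r₅..R, Cg * r ^ (-1-m:ℝ) := by
      apply intervalIntegral.integral_mono_on hR hint1 hint2
      exact fun x hx => hgb x hx.1
    have hnm : (0:ℝ) ∉ uIcc r₅ R := by
      intro hmem
      have := hsub hmem
      simp only [mem_Ioi] at this
      linarith
    have step2 : (∫ r in r₅..R, (r:ℝ) ^ (-1-m:ℝ)) = (R ^ (-m:ℝ) - r₅ ^ (-m:ℝ))/(-m) := by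
      rw [integral_rpow (Or.inr ⟨by intro hh; linarith, hnm⟩),
        show (-1-m+1:ℝ) = -m by ring]
    have step3 : (∫ r in r₅..R, Cg * r ^ (-1-m:ℝ)) = Cg * ((R ^ (-m:ℝ) - r₅ ^ (-m:ℝ))/(-m)) := by
      rw [intervalIntegral.integral_const_mul, step2]
    have hRm : (0:ℝ) ≤ R ^ (-m:ℝ) := Real.rpow_nonneg (by linarith) _
    have step4 : (R ^ (-m:ℝ) - r₅ ^ (-m:ℝ))/(-m) ≤ r₅ ^ (-m:ℝ)/m := by
      rw [div_neg, show -((R ^ (-m:ℝ) - r₅ ^ (-m:ℝ))/m) = (r₅ ^ (-m:ℝ) - R ^ (-m:ℝ))/m by ring]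
      gcongr
      linarith
    have step5 : Cg * ((R ^ (-m:ℝ) - r₅ ^ (-m:ℝ))/(-m)) ≤ Cg * (r₅ ^ (-m:ℝ)/m) :=
      mul_le_mul_of_nonneg_left step4 hCg0
    linarith [step1, step3.le, step3.ge]
  -- zeta bounded
  obtain ⟨Cz, hCz⟩ : ∃ Cz : ℝ, Cz = |(fun s : ℝ => s ^ (α-1) * (s * w s + v s)) r₅|
      + Cg * (r₅ ^ (-m:ℝ) / m) := ⟨_, rfl⟩
  have hCz0 : 0 ≤ Cz := by
    rw [hCz]
    have h1 : (0:ℝ) ≤ r₅ ^ (-m:ℝ) := Real.rpow_nonneg hr₅pos.le _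
    positivity
  have hζbound : ∀ R, r₅ ≤ R → |(fun s : ℝ => s ^ (α-1) * (s * w s + v s)) R| ≤ Cz := by
    intro R hR
    rw [hCz]
    linarith [hgr R hR, hIg R hR]
  -- derivative bound
  obtain ⟨C₃, hC₃⟩ : ∃ C₃ : ℝ, C₃ = A ^ (q-1:ℝ) * Cz + Cg := ⟨_, rfl⟩
  have hC₃0 : 0 ≤ C₃ := by rw [hC₃]; positivity
  have hhb : ∀ r, r₅ ≤ r → |w r| ^ (q-1) / r ≤ A ^ (q-1:ℝ) * r ^ (-1-m:ℝ) := by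
    intro r hr
    have hrpos : (0:ℝ) < r := lt_of_lt_of_le hr₅pos hr
    have hr1 : (1:ℝ) ≤ r := le_trans h15 hr
    have e1 : |w r| ^ (q-1) ≤ A ^ (q-1:ℝ) * r ^ (-(gam*(q-1))) := by
      calc |w r| ^ (q-1) ≤ (A * r ^ (-gam)) ^ (q-1:ℝ) :=
            Real.rpow_le_rpow (abs_nonneg _) (hwb r hr) (by linarith)
        _ = A ^ (q-1:ℝ) * (r ^ (-gam:ℝ)) ^ (q-1:ℝ) :=
            Real.mul_rpow hA (Real.rpow_nonneg hrpos.le _)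
        _ = A ^ (q-1:ℝ) * r ^ (-(gam*(q-1))) := by
            rw [← Real.rpow_mul hrpos.le]; ring_nf
    have e2 : r ^ (-(gam*(q-1)):ℝ) / r = r ^ (-(gam*(q-1)) - 1:ℝ) := by
      rw [Real.rpow_sub hrpos, Real.rpow_one]
    have e3 : r ^ (-(gam*(q-1)) - 1:ℝ) ≤ r ^ (-1-m:ℝ) :=
      Real.rpow_le_rpow_of_exponent_le hr1 (by linarith)
    calc |w r| ^ (q-1) / r ≤ (A ^ (q-1:ℝ) * r ^ (-(gam*(q-1)))) / r := by
          gcongr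
      _ = A ^ (q-1:ℝ) * (r ^ (-(gam*(q-1)):ℝ) / r) := by ring
      _ = A ^ (q-1:ℝ) * r ^ (-(gam*(q-1)) - 1:ℝ) := by rw [e2]
      _ ≤ A ^ (q-1:ℝ) * r ^ (-1-m:ℝ) := mul_le_mul_of_nonneg_left e3 (by positivity)
  have hdb : ∀ r, r₅ ≤ r →
      |(-(|w r| ^ (q-1) / r) * ((fun s : ℝ => s ^ (α-1) * (s * w s + v s)) r)
        + (α - N + |w r| ^ (q-1)) * (r ^ (α-2:ℝ) * v r))| ≤ C₃ * r ^ (-1-m:ℝ) := by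
    intro r hr
    have hrpos : (0:ℝ) < r := lt_of_lt_of_le hr₅pos hr
    have h1 := hζbound r hr
    have h2 := hgb r hr
    have h3 := hhb r hr
    have h4 : (0:ℝ) ≤ |w r| ^ (q-1) / r :=
      div_nonneg (Real.rpow_nonneg (abs_nonneg _) _) hrpos.le
    refine le_trans (abs_add_le _ _) ?_
    rw [abs_mul, abs_neg, abs_of_nonneg h4, hC₃]
    have h5 : |w r| ^ (q-1) / r * |(fun s : ℝ => s ^ (α-1) * (s * w s + v s)) r|
        ≤ (A ^ (q-1:ℝ) * r ^ (-1-m:ℝ)) * Cz :=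
      mul_le_mul h3 h1 (abs_nonneg _) (by positivity)
    nlinarith [h2, h5, Real.rpow_nonneg hrpos.le (-1-m:ℝ)]
  -- integrability on Ioi r₅
  have hζ'C : ContinuousOn (fun r => -(|w r| ^ (q-1) / r)
      * ((fun s : ℝ => s ^ (α-1) * (s * w s + v s)) r)
      + (α - N + |w r| ^ (q-1)) * (r ^ (α-2:ℝ) * v r)) (Ioi r₀) :=
    ((hhC.neg).mul hζC).add hgC
  have hsub5 : Ioi r₅ ⊆ Ioi r₀ := fun x hx => lt_trans hr₀5 hx
  have hmaj : Integrable (fun r : ℝ => C₃ * r ^ (-1-m:ℝ)) (volume.restrict (Ioi r₅)) := by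
    have := integrableOn_Ioi_rpow_of_lt (show (-1-m:ℝ) < -1 by linarith) hr₅pos
    exact this.const_mul C₃
  have hintg : IntegrableOn (fun r => -(|w r| ^ (q-1) / r)
      * ((fun s : ℝ => s ^ (α-1) * (s * w s + v s)) r)
      + (α - N + |w r| ^ (q-1)) * (r ^ (α-2:ℝ) * v r)) (Ioi r₅) volume := by
    apply Integrable.mono' hmaj
    · exact ((hζ'C.mono hsub5)).aestronglyMeasurable measurableSet_Ioi
    · rw [ae_restrict_iff' measurableSet_Ioi]
      apply ae_of_all
      intro r hr
      rw [Real.norm_eq_abs]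
      exact hdb r (le_of_lt hr)
  -- FTC
  have hFTC : ∀ R, r₅ ≤ R → (fun s : ℝ => s ^ (α-1) * (s * w s + v s)) R
      = (fun s : ℝ => s ^ (α-1) * (s * w s + v s)) r₅
        + ∫ r in r₅..R, (-(|w r| ^ (q-1) / r)
            * ((fun s : ℝ => s ^ (α-1) * (s * w s + v s)) r)
            + (α - N + |w r| ^ (q-1)) * (r ^ (α-2:ℝ) * v r)) := by
    intro R hR
    have hsub : uIcc r₅ R ⊆ Ioi r₀ := by
      rw [uIcc_of_le hR]
      exact fun x hx => lt_of_lt_of_le hr₀5 hx.1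
    have := intervalIntegral.integral_eq_sub_of_hasDerivAt
      (f := fun s : ℝ => s ^ (α-1) * (s * w s + v s))
      (fun x hx => hζD x (hsub hx))
      ((hζ'C.mono hsub).intervalIntegrable)
    linarith [this]
  have hlim : Tendsto (fun R => ∫ r in r₅..R, (-(|w r| ^ (q-1) / r)
      * ((fun s : ℝ => s ^ (α-1) * (s * w s + v s)) r)
      + (α - N + |w r| ^ (q-1)) * (r ^ (α-2:ℝ) * v r))) atTop
      (𝓝 (∫ r in Ioi r₅, (-(|w r| ^ (q-1) / r)
      * ((fun s : ℝ => s ^ (α-1) * (s * w s + v s)) r)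
      + (α - N + |w r| ^ (q-1)) * (r ^ (α-2:ℝ) * v r)))) :=
    intervalIntegral_tendsto_integral_Ioi r₅ hintg tendsto_id
  have hζlim : Tendsto (fun s : ℝ => s ^ (α-1) * (s * w s + v s)) atTop
      (𝓝 ((fun s : ℝ => s ^ (α-1) * (s * w s + v s)) r₅
        + ∫ r in Ioi r₅, (-(|w r| ^ (q-1) / r)
            * ((fun s : ℝ => s ^ (α-1) * (s * w s + v s)) r)
            + (α - N + |w r| ^ (q-1)) * (r ^ (α-2:ℝ) * v r)))) := by
    have h2 := hlim.const_add ((fun s : ℝ => s ^ (α-1) * (s * w s + v s)) r₅)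
    apply h2.congr'
    filter_upwards [eventually_ge_atTop r₅] with R hR
    exact (hFTC R hR).symm
  have hvlim : Tendsto (fun R : ℝ => R ^ (α-1:ℝ) * v R) atTop (𝓝 0) := by
    apply squeeze_zero_norm' (a := fun R : ℝ => K * R ^ (-m:ℝ))
    · filter_upwards [eventually_ge_atTop r₅] with R hR
      have hRpos : (0:ℝ) < R := lt_of_lt_of_le hr₅pos hR
      have hR1 : (1:ℝ) ≤ R := le_trans h15 hR
      rw [Real.norm_eq_abs, abs_mul, abs_of_nonneg (Real.rpow_nonneg hRpos.le _)]
      calc R ^ (α-1:ℝ) * |v R| ≤ R ^ (α-1:ℝ) * (K * R ^ (-lam)) :=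
            mul_le_mul_of_nonneg_left (hvb R hR) (Real.rpow_nonneg hRpos.le _)
        _ = K * (R ^ (α-1:ℝ) * R ^ (-lam)) := by ring
        _ = K * R ^ (α-1-lam) := by rw [← Real.rpow_add hRpos]; ring_nf
        _ ≤ K * R ^ (-m:ℝ) := mul_le_mul_of_nonneg_left
            (Real.rpow_le_rpow_of_exponent_le hR1 (by linarith)) hK.le
    · have := (tendsto_rpow_neg_atTop hm).const_mul K
      simpa using this
  refine ⟨((fun s : ℝ => s ^ (α-1) * (s * w s + v s)) r₅
        + ∫ r in Ioi r₅, (-(|w r| ^ (q-1) / r)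
            * ((fun s : ℝ => s ^ (α-1) * (s * w s + v s)) r)
            + (α - N + |w r| ^ (q-1)) * (r ^ (α-2:ℝ) * v r))) - 0, ?_⟩
  apply (hζlim.sub hvlim).congr'
  filter_upwards [eventually_ge_atTop r₅] with R hR
  have hRpos : (0:ℝ) < R := lt_of_lt_of_le hr₅pos hR
  have hRa : R ^ α = R ^ (α-1:ℝ) * R := by
    rw [← Real.rpow_add_one hRpos.ne']; ring_nf
  show R ^ (α-1:ℝ) * (R * w R + v R) - R ^ (α-1:ℝ) * v R = R ^ α * w R
  rw [hRa]
  ring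

end AuxLemmas

/-- Assume (L): `p > 2`, or `p < 2` and `α < δ = p/(2-p)`. Then every solution of (E)
on `[r₀,∞)` satisfies `lim_{r→∞} r^α w(r) = L` for some `L ∈ ℝ`. -/
theorem stmt8 (N : ℕ) (hN : 1 ≤ N) (p q α : ℝ) (hp : 1 < p) (hq : 1 < q) (hα : 0 < α)
    (hL : 2 < p ∨ (p < 2 ∧ α < p / (2 - p)))
    (r₀ : ℝ) (hr₀ : 0 < r₀) (w : ℝ → ℝ) (hw : IsSolutionOn N p q α w (Ici r₀)) :
    ∃ L : ℝ, Tendsto (fun r => r ^ α * w r) atTop (𝓝 L) := by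
  have hp1 : (0:ℝ) < p - 1 := by linarith
  obtain ⟨hwCD, hvCD, hODE0⟩ := hw
  -- setup
  set w₁ : ℝ → ℝ := fun r => derivWithin w (Ici r₀) r with hw₁def
  set v : ℝ → ℝ := fun r => phiP p (w₁ r) with hvdef
  set v₁ : ℝ → ℝ := fun r => derivWithin (fun s => phiP p (w₁ s)) (Ici r₀) r with hv₁def
  have hIci : ∀ r ∈ Ioi r₀, Ici r₀ ∈ 𝓝 r :=
    fun r hr => mem_of_superset (isOpen_Ioi.mem_nhds hr) Ioi_subset_Ici_self
  have hwD : ∀ r ∈ Ioi r₀, HasDerivAt w (w₁ r) r := by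
    intro r hr
    have hda : DifferentiableAt ℝ w r :=
      ((hwCD.differentiableOn one_ne_zero) r (Ioi_subset_Ici_self hr)).differentiableAt (hIci r hr)
    have heq : w₁ r = deriv w r := derivWithin_of_mem_nhds (hIci r hr)
    rw [heq]
    exact hda.hasDerivAt
  have hvD : ∀ r ∈ Ioi r₀, HasDerivAt v (v₁ r) r := by
    intro r hr
    have hda : DifferentiableAt ℝ (fun s => phiP p (w₁ s)) r :=
      ((hvCD.differentiableOn one_ne_zero) r (Ioi_subset_Ici_self hr)).differentiableAt (hIci r hr)
    have heq : v₁ r = deriv (fun s => phiP p (w₁ s)) r := derivWithin_of_mem_nhds (hIci r hr)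
    rw [hvdef, heq]
    exact hda.hasDerivAt
  have hODE : ∀ r ∈ Ioi r₀, v₁ r
      = -(((N:ℝ)-1)/r) * v r - r * w₁ r - α * w r - |w r| ^ (q-1) * w r := by
    intro r hr
    have h := hODE0 r (Ioi_subset_Ici_self hr)
    simp only [hv₁def, hvdef, hw₁def]
    linarith [h]
  have hwC : ContinuousOn w (Ioi r₀) := hwCD.continuousOn.mono Ioi_subset_Ici_self
  have hvC : ContinuousOn v (Ioi r₀) := hvCD.continuousOn.mono Ioi_subset_Ici_self
  have hw₁v : ∀ r, phiP (p/(p-1)) (v r) = w₁ r := fun r => phiP_inv hp (w₁ r)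
  -- energy
  have hED := energy_deriv hr₀ hp hq hwD hvD hODE hw₁v
  have hNnn : (0:ℝ) ≤ (N:ℝ) - 1 := by
    have : (1:ℝ) ≤ (N:ℝ) := by exact_mod_cast hN
    linarith
  have hEanti : AntitoneOn
      (fun s => (p-1)/p * |v s| ^ (p/(p-1)) + α/2 * (w s)^2 + |w s| ^ (q+1) / (q+1))
      (Ioi r₀) := by
    apply antitoneOn_of_deriv_nonpos (convex_Ioi r₀)
    · exact fun r hr => (hED r hr).continuousAt.continuousWithinAt
    · rw [interior_Ioi]
      exact fun r hr => (hED r hr).differentiableAt.differentiableWithinAt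
    · rw [interior_Ioi]
      intro r hr
      rw [(hED r hr).deriv]
      have hrpos : (0:ℝ) < r := lt_trans hr₀ hr
      have h1 : 0 ≤ ((N:ℝ)-1)/r * (w₁ r * v r) := by
        apply mul_nonneg (div_nonneg hNnn hrpos.le)
        rw [hvdef, self_mul_phiP hp]
        exact Real.rpow_nonneg (abs_nonneg _) _
      have h2 : 0 ≤ r * (w₁ r)^2 := by positivity
      linarith
  obtain ⟨r₁, hr₁⟩ : ∃ r₁ : ℝ, r₁ = r₀ + 1 := ⟨_, rfl⟩
  have hr₀1 : r₀ < r₁ := by rw [hr₁]; linarith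
  have h11 : 1 ≤ r₁ := by rw [hr₁]; linarith
  obtain ⟨E₁, hE₁⟩ : ∃ E₁ : ℝ, E₁ = (p-1)/p * |v r₁| ^ (p/(p-1)) + α/2 * (w r₁)^2
      + |w r₁| ^ (q+1) / (q+1) := ⟨_, rfl⟩
  have hterm1 : ∀ s : ℝ, 0 ≤ (p-1)/p * |v s| ^ (p/(p-1)) := by
    intro s
    apply mul_nonneg (by positivity)
    exact Real.rpow_nonneg (abs_nonneg _) _
  have hterm2 : ∀ s : ℝ, 0 ≤ α/2 * (w s)^2 := by intro s; positivity
  have hterm3 : ∀ s : ℝ, 0 ≤ |w s| ^ (q+1) / (q+1) := by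
    intro s
    apply div_nonneg (Real.rpow_nonneg (abs_nonneg _) _) (by linarith)
  have hE₁0 : 0 ≤ E₁ := by
    rw [hE₁]
    linarith [hterm1 r₁, hterm2 r₁, hterm3 r₁]
  have hEb : ∀ r, r₁ ≤ r → (p-1)/p * |v r| ^ (p/(p-1)) + α/2 * (w r)^2
      + |w r| ^ (q+1) / (q+1) ≤ E₁ := by
    intro r hr
    rw [hE₁]
    exact hEanti (by rw [hr₁]; simp only [mem_Ioi]; linarith)
      (by simp only [mem_Ioi]; linarith) hr
  obtain ⟨A₀, hA₀⟩ : ∃ A₀ : ℝ, A₀ = Real.sqrt (2*E₁/α) := ⟨_, rfl⟩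
  have hA₀0 : 0 ≤ A₀ := by rw [hA₀]; exact Real.sqrt_nonneg _
  have hA₀b : ∀ r, r₁ ≤ r → |w r| ≤ A₀ := by
    intro r hr
    have h1 := hEb r hr
    have h2 : (w r)^2 ≤ 2*E₁/α := by
      rw [le_div_iff₀ hα]
      nlinarith [hterm1 r, hterm3 r]
    calc |w r| = Real.sqrt ((w r)^2) := (Real.sqrt_sq_eq_abs _).symm
      _ ≤ Real.sqrt (2*E₁/α) := Real.sqrt_le_sqrt h2
      _ = A₀ := hA₀.symm
  obtain ⟨M₁, hM₁⟩ : ∃ M₁ : ℝ, M₁ = (p/(p-1) * E₁) ^ ((p-1)/p) := ⟨_, rfl⟩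
  have hM₁b : ∀ r, r₁ ≤ r → |v r| ≤ M₁ := by
    intro r hr
    have h1 := hEb r hr
    have h2 : (p-1)/p * (|v r| ^ (p/(p-1))) ≤ E₁ := by
      nlinarith [hterm2 r, hterm3 r]
    have h3 : |v r| ^ (p/(p-1)) ≤ p/(p-1) * E₁ := by
      have h4 := mul_le_mul_of_nonneg_left h2 (show (0:ℝ) ≤ p/(p-1) by positivity)
      have h5 : p/(p-1) * ((p-1)/p * (|v r| ^ (p/(p-1)))) = |v r| ^ (p/(p-1)) := by
        field_simp
      linarith [h4, h5.symm.le, h5.le]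
    have h6 : (|v r| ^ (p/(p-1))) ^ ((p-1)/p) = |v r| := by
      rw [← Real.rpow_mul (abs_nonneg _),
        show (p/(p-1)) * ((p-1)/p) = 1 by field_simp, Real.rpow_one]
    calc |v r| = (|v r| ^ (p/(p-1))) ^ ((p-1)/p) := h6.symm
      _ ≤ (p/(p-1) * E₁) ^ ((p-1)/p) :=
        Real.rpow_le_rpow (Real.rpow_nonneg (abs_nonneg _) _) h3 (by positivity)
      _ = M₁ := hM₁.symm
  -- constants
  obtain ⟨κ, hκdef⟩ : ∃ κ : ℝ, κ = (α+1)*(p-1) - (α-1) := ⟨_, rfl⟩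
  have hκ : 0 < κ := by
    rcases hL with h | ⟨h1, h2⟩
    · have : 0 < α * (p - 2) := mul_pos hα (by linarith)
      rw [hκdef]; nlinarith
    · have h3 : α * (2-p) < p := by
        rw [lt_div_iff₀ (by linarith : (0:ℝ) < 2 - p)] at h2
        linarith [h2]
      rw [hκdef]; nlinarith
  obtain ⟨ε, hεdef⟩ : ∃ ε : ℝ, ε = min (κ/(2*(p-1))) (α/2) := ⟨_, rfl⟩
  have hε : 0 < ε := by
    rw [hεdef]
    exact lt_min (by positivity) (by positivity)
  have hεα : ε ≤ α/2 := by rw [hεdef]; exact min_le_right _ _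
  have hεκ : ε ≤ κ/(2*(p-1)) := by rw [hεdef]; exact min_le_left _ _
  obtain ⟨gbar, hgbar⟩ : ∃ g : ℝ, g = α - ε := ⟨_, rfl⟩
  have hgbar0 : 0 < gbar := by rw [hgbar]; linarith
  have hgbarα : gbar < α := by rw [hgbar]; linarith
  have hsubp : ∀ γ : ℝ, 0 ≤ γ → γ ≤ gbar → γ * (2 - p) < p := by
    intro γ h0 h1
    rcases hL with h | ⟨hlt, h2⟩
    · nlinarith
    · have h3 : α * (2-p) < p := by
        rw [lt_div_iff₀ (by linarith : (0:ℝ) < 2 - p)] at h2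
        linarith [h2]
      nlinarith
  obtain ⟨d₀, hd₀def⟩ : ∃ d₀ : ℝ, d₀ = min 1 (p - gbar*(2-p)) := ⟨_, rfl⟩
  have hd₀pos : 0 < d₀ := by
    rw [hd₀def]
    exact lt_min one_pos (by linarith [hsubp gbar hgbar0.le le_rfl])
  have hd₀1 : d₀ ≤ 1 := by rw [hd₀def]; exact min_le_left _ _
  have hψd : ∀ γ : ℝ, 0 ≤ γ → γ ≤ gbar → γ + d₀ ≤ (p-1)*γ + p := by
    intro γ h0 h1
    rcases le_or_gt (2-p) 0 with h | h
    · nlinarith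
    · have : d₀ ≤ p - gbar*(2-p) := by rw [hd₀def]; exact min_le_right _ _
      nlinarith
  -- the bootstrap predicate
  set P : ℝ → Prop := fun γ => ∃ A r₃, 0 ≤ A ∧ r₁ ≤ r₃ ∧ 1 ≤ r₃ ∧
    ∀ r, r₃ ≤ r → |w r| ≤ A * r ^ (-γ) with hPdef
  have hbase : P 0 := by
    refine ⟨A₀, r₁, hA₀0, le_rfl, h11, ?_⟩
    intro r hr
    rw [neg_zero, Real.rpow_zero, mul_one]
    exact hA₀b r hr
  have hmono : ∀ γ γ' : ℝ, 0 ≤ γ' → γ' ≤ γ → P γ → P γ' := by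
    intro γ γ' h0 h1 ⟨A, r₃, hA, h13, h13', hb⟩
    refine ⟨A, r₃, hA, h13, h13', ?_⟩
    intro r hr
    have hr1 : (1:ℝ) ≤ r := le_trans h13' hr
    calc |w r| ≤ A * r ^ (-γ) := hb r hr
      _ ≤ A * r ^ (-γ') := mul_le_mul_of_nonneg_left
          (Real.rpow_le_rpow_of_exponent_le hr1 (by linarith)) hA
  have hstep : ∀ γ : ℝ, 0 ≤ γ → γ ≤ gbar → P γ → P (min gbar ((p-1)*γ + p)) := by
    intro γ h0 h1 ⟨A, r₃, hA, h13, h13', hb⟩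
    obtain ⟨r₄, K, h34, hK, hvb⟩ := Vbound_main hN hp hq hα hvD hODE hw₁v hr₀1 hM₁b
      h0 (hsubp γ h0 h1) hA h13 h13' hb
    have hr₀4 : r₀ < r₄ := lt_of_lt_of_le hr₀1 (le_trans h13 h34)
    have h14 : 1 ≤ r₄ := le_trans h13' h34
    have hwb0 : ∀ r, r₄ ≤ r → |w r| ≤ A₀ :=
      fun r hr => hA₀b r (le_trans h13 (le_trans h34 hr))
    obtain ⟨A', hA'0, hstep'⟩ := wStep hr₀ hq hwD hvD hODE hwC hvC hr₀4 h14 hK hε hA₀0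
      hwb0 hvb
    refine ⟨A', r₄, hA'0, le_trans h13 h34, h14, ?_⟩
    intro R hR
    have hRpos : (0:ℝ) < R := lt_trans hr₀ (lt_of_lt_of_le hr₀4 hR)
    have hRapos : (0:ℝ) < R ^ α := Real.rpow_pos_of_pos hRpos _
    have hexpand : (γ+1)*(p-1) = (p-1)*γ + p - 1 := by ring
    have hexp : min gbar ((p-1)*γ + p) = α - max (α-1-(γ+1)*(p-1)) ε := by
      rcases le_total (α-1-(γ+1)*(p-1)) ε with h | h
      · rw [max_eq_right h, min_eq_left (by rw [hgbar]; linarith), hgbar]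
      · rw [max_eq_left h, min_eq_right (by rw [hgbar]; linarith)]
        ring
    have h2 := hstep' R hR
    have h3 : |w R| * R ^ α ≤ A' * R ^ (max (α-1-(γ+1)*(p-1)) ε) := by
      calc |w R| * R ^ α = |R ^ α * w R| := by
            rw [abs_mul, abs_of_pos hRapos]; ring
        _ ≤ A' * R ^ (max (α-1-(γ+1)*(p-1)) ε) := h2
    have h4 : |w R| ≤ A' * R ^ (max (α-1-(γ+1)*(p-1)) ε) / R ^ α :=
      (le_div_iff₀ hRapos).2 h3
    have h5 : A' * R ^ (max (α-1-(γ+1)*(p-1)) ε) / R ^ α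
        = A' * R ^ (-(min gbar ((p-1)*γ + p))) := by
      rw [mul_div_assoc, ← Real.rpow_sub hRpos, hexp]
      ring_nf
    rw [← h5]
    exact h4
  have hiter : ∀ n : ℕ, P (min gbar (n * d₀)) := by
    intro n
    induction n with
    | zero => simpa [min_eq_right hgbar0.le] using hbase
    | succ n ih =>
      have hγn0 : 0 ≤ min gbar ((n:ℝ) * d₀) := le_min hgbar0.le (by positivity)
      have hγng : min gbar ((n:ℝ) * d₀) ≤ gbar := min_le_left _ _
      have h1 := hstep _ hγn0 hγng ih
      apply hmono _ _ (le_min hgbar0.le (by positivity)) _ h1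
      have hψ := hψd _ hγn0 hγng
      apply le_min (min_le_left _ _)
      push_cast
      rcases le_total ((n:ℝ) * d₀) gbar with h | h
      · have e : min gbar ((n:ℝ)*d₀) = (n:ℝ)*d₀ := min_eq_right h
        rw [e] at hψ ⊢
        calc min gbar (((n:ℝ)+1) * d₀) ≤ ((n:ℝ)+1) * d₀ := min_le_right _ _
          _ = (n:ℝ)*d₀ + d₀ := by ring
          _ ≤ (p-1) * ((n:ℝ)*d₀) + p := hψ
      · have e : min gbar ((n:ℝ)*d₀) = gbar := min_eq_left h
        rw [e] at hψ ⊢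
        calc min gbar (((n:ℝ)+1) * d₀) ≤ gbar := min_le_left _ _
          _ ≤ (p-1) * gbar + p := by linarith
  obtain ⟨n, hn⟩ := exists_nat_ge (gbar / d₀)
  have hng : gbar ≤ (n:ℝ) * d₀ := by
    rw [div_le_iff₀ hd₀pos] at hn
    linarith
  have hPg : P gbar := by
    have := hiter n
    rwa [min_eq_left hng] at this
  obtain ⟨A, r₃, hA, h13, h13', hb⟩ := hPg
  obtain ⟨r₅, K, h35, hK, hvb⟩ := Vbound_main hN hp hq hα hvD hODE hw₁v hr₀1 hM₁b
    hgbar0.le (hsubp gbar hgbar0.le le_rfl) hA h13 h13' hb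
  obtain ⟨m, hmdef⟩ : ∃ m : ℝ, m = min (gbar*(q-1)) (κ/2) := ⟨_, rfl⟩
  have hm : 0 < m := by
    rw [hmdef]
    exact lt_min (mul_pos hgbar0 (by linarith)) (by positivity)
  have hm2 : α - 1 - (gbar+1)*(p-1) ≤ -m := by
    have h1 : m ≤ κ/2 := by rw [hmdef]; exact min_le_right _ _
    have h2 : ε * (p-1) ≤ κ/2 := by
      have h3 := mul_le_mul_of_nonneg_right hεκ (le_of_lt hp1)
      have h4 : κ/(2*(p-1)) * (p-1) = κ/2 := by field_simp
      linarith
    have hidd : α - 1 - (gbar+1)*(p-1) = -κ + ε*(p-1) := by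
      rw [hgbar, hκdef]; ring
    linarith
  have hm3 : m ≤ gbar*(q-1) := by rw [hmdef]; exact min_le_left _ _
  have hwb5 : ∀ r, r₅ ≤ r → |w r| ≤ A * r ^ (-gbar) := fun r hr => hb r (le_trans h35 hr)
  have hr₀5 : r₀ < r₅ := lt_of_lt_of_le hr₀1 (le_trans h13 h35)
  have h15 : 1 ≤ r₅ := le_trans h13' h35
  exact final_conv hr₀ hq hwD hvD hODE hwC hvC hr₀5 h15 hK hA hm hm2 hm3 hgbar0.le hwb5 hvb
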